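/- Fix μ, λ > 0 and k, k̂ ∈ ℝ, and define σ̂ : Sym(3) → Sym(3) by σ̂(X) = 2 μ exp(k ‖X‖²) exp(−tr X) X + λ exp(k̂ (tr X)²) exp(−tr X) (tr X) · 𝟙 (scalar exponentials, 𝟙 the 3×3 identity matrix). If k ≥ 3/8 and k̂ ≥ 1/8 then ⟨σ̂(X₁) − σ̂(X₂), X₁ − X₂⟩ ≥ 0 for all X₁, X₂ ∈ Sym(3); if moreover k > 3/8 then ⟨σ̂(X₁) − σ̂(X₂), X₁ − X₂⟩ > 0 for all X₁ ≠ X₂ in Sym(3). -/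

import Mathlib

open Matrix

noncomputable section

abbrev M3 := Matrix (Fin 3) (Fin 3) ℝ

/-- The Cauchy stress of the full exponentiated Hencky energy:
`σ̂(X) = 2 μ e^{k ‖X‖²} e^{−tr X} X + λ e^{k̂ (tr X)²} e^{−tr X} (tr X) 𝟙`,
with `‖X‖² = tr(X Xᵀ)`. -/
noncomputable def expHenckyStressFull (μ lam k khat : ℝ) (X : M3) : M3 :=
  (2 * μ * Real.exp (k * Matrix.trace (X * Xᵀ)) * Real.exp (-Matrix.trace X)) • X +
    (lam * Real.exp (khat * (Matrix.trace X) ^ 2) * Real.exp (-Matrix.trace X) *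
      Matrix.trace X) • (1 : M3)

namespace ExpHenckyAux

/-- The 1-D profile function along the segment. -/
def F (μ lam k khat qA a h2 tA tH : ℝ) (x : ℝ) : ℝ :=
  2 * μ * Real.exp (k * (qA + 2 * a * x + h2 * x ^ 2)) * Real.exp (-(tA + tH * x)) *
      (a + h2 * x) +
    lam * Real.exp (khat * (tA + tH * x) ^ 2) * Real.exp (-(tA + tH * x)) * (tA + tH * x) * tH

/-- Its derivative, written in factored form. -/
def G (μ lam k khat qA a h2 tA tH : ℝ) (s : ℝ) : ℝ :=
  2 * μ * Real.exp (k * (qA + 2 * a * s + h2 * s ^ 2)) * Real.exp (-(tA + tH * s)) *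
      (2 * k * (a + h2 * s) ^ 2 - tH * (a + h2 * s) + h2) +
    lam * Real.exp (khat * (tA + tH * s) ^ 2) * Real.exp (-(tA + tH * s)) *
      ((2 * khat * (tA + tH * s) ^ 2 - (tA + tH * s) + 1) * tH ^ 2)

lemma hasDerivAt_F (μ lam k khat qA a h2 tA tH : ℝ) (s : ℝ) :
    HasDerivAt (F μ lam k khat qA a h2 tA tH) (G μ lam k khat qA a h2 tA tH s) s := by
  have ht : HasDerivAt (fun x : ℝ => tA + tH * x) tH s := by
    simpa using ((hasDerivAt_id s).const_mul tH).const_add tA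
  have hx2 : HasDerivAt (fun x : ℝ => x ^ 2) (2 * s) s := by
    simpa using hasDerivAt_pow 2 s
  have hq : HasDerivAt (fun x : ℝ => k * (qA + 2 * a * x + h2 * x ^ 2))
      (k * (2 * a + h2 * (2 * s))) s := by
    have h1 : HasDerivAt (fun x : ℝ => qA + 2 * a * x + h2 * x ^ 2) (2 * a + h2 * (2 * s)) s := by
      have := ((((hasDerivAt_id s).const_mul (2 * a)).const_add qA).add (hx2.const_mul h2))
      exact this.congr_deriv (by ring)
    exact h1.const_mul k
  have hb : HasDerivAt (fun x : ℝ => a + h2 * x) h2 s := by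
    simpa using ((hasDerivAt_id s).const_mul h2).const_add a
  have hp : HasDerivAt (fun x : ℝ => khat * (tA + tH * x) ^ 2)
      (khat * (2 * (tA + tH * s) ^ 1 * tH)) s := by
    exact (ht.pow 2).const_mul khat
  have hT1 := ((hq.exp.const_mul (2 * μ)).mul ht.neg.exp).mul hb
  have hT2 := (((hp.exp.const_mul lam).mul ht.neg.exp).mul ht).mul_const tH
  have h := hT1.add hT2
  refine h.congr_deriv ?_
  unfold G
  simp only [Pi.mul_apply, Pi.neg_apply]
  ring

lemma G_nonneg (μ lam k khat qA a h2 tA tH : ℝ) (hμ : 0 < μ) (hlam : 0 < lam)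
    (hk : 3 / 8 ≤ k) (hkh : 1 / 8 ≤ khat) (hh2 : 0 ≤ h2) (hCS : tH ^ 2 ≤ 3 * h2) (s : ℝ) :
    0 ≤ G μ lam k khat qA a h2 tA tH s := by
  unfold G
  set b := a + h2 * s with hbdef
  set t := tA + tH * s with htdef
  have hP1 : 0 ≤ 2 * k * b ^ 2 - tH * b + h2 := by
    nlinarith [sq_nonneg (4 * k * b - tH), sq_nonneg b, sq_nonneg tH]
  have hP2 : 0 ≤ 2 * khat * t ^ 2 - t + 1 := by
    nlinarith [sq_nonneg (4 * khat * t - 1), sq_nonneg t]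
  have e1 := Real.exp_pos (k * (qA + 2 * a * s + h2 * s ^ 2))
  have e2 := Real.exp_pos (-t)
  have e3 := Real.exp_pos (khat * t ^ 2)
  have h1 : 0 ≤ 2 * μ * Real.exp (k * (qA + 2 * a * s + h2 * s ^ 2)) * Real.exp (-t) *
      (2 * k * b ^ 2 - tH * b + h2) := by positivity
  have h2' : 0 ≤ lam * Real.exp (khat * t ^ 2) * Real.exp (-t) *
      ((2 * khat * t ^ 2 - t + 1) * tH ^ 2) := by positivity
  linarith

lemma G_pos (μ lam k khat qA a h2 tA tH : ℝ) (hμ : 0 < μ) (hlam : 0 < lam)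
    (hk : 3 / 8 < k) (hkh : 1 / 8 ≤ khat) (hh2 : 0 < h2) (hCS : tH ^ 2 ≤ 3 * h2) (s : ℝ) :
    0 < G μ lam k khat qA a h2 tA tH s := by
  unfold G
  set b := a + h2 * s with hbdef
  set t := tA + tH * s with htdef
  have hP1 : 0 < 2 * k * b ^ 2 - tH * b + h2 := by
    nlinarith [sq_nonneg (4 * k * b - tH), sq_nonneg b, sq_nonneg tH]
  have hP2 : 0 ≤ 2 * khat * t ^ 2 - t + 1 := by
    nlinarith [sq_nonneg (4 * khat * t - 1), sq_nonneg t]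
  have e1 := Real.exp_pos (k * (qA + 2 * a * s + h2 * s ^ 2))
  have e2 := Real.exp_pos (-t)
  have e3 := Real.exp_pos (khat * t ^ 2)
  have h1 : 0 < 2 * μ * Real.exp (k * (qA + 2 * a * s + h2 * s ^ 2)) * Real.exp (-t) *
      (2 * k * b ^ 2 - tH * b + h2) := by positivity
  have h2' : 0 ≤ lam * Real.exp (khat * t ^ 2) * Real.exp (-t) *
      ((2 * khat * t ^ 2 - t + 1) * tH ^ 2) := by positivity
  linarith

lemma F_mono (μ lam k khat qA a h2 tA tH : ℝ) (hμ : 0 < μ) (hlam : 0 < lam)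
    (hk : 3 / 8 ≤ k) (hkh : 1 / 8 ≤ khat) (hh2 : 0 ≤ h2) (hCS : tH ^ 2 ≤ 3 * h2) :
    F μ lam k khat qA a h2 tA tH 0 ≤ F μ lam k khat qA a h2 tA tH 1 :=
  monotone_of_hasDerivAt_nonneg (hasDerivAt_F μ lam k khat qA a h2 tA tH)
    (fun s => G_nonneg μ lam k khat qA a h2 tA tH hμ hlam hk hkh hh2 hCS s) zero_le_one

lemma F_strictMono (μ lam k khat qA a h2 tA tH : ℝ) (hμ : 0 < μ) (hlam : 0 < lam)
    (hk : 3 / 8 < k) (hkh : 1 / 8 ≤ khat) (hh2 : 0 < h2) (hCS : tH ^ 2 ≤ 3 * h2) :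
    F μ lam k khat qA a h2 tA tH 0 < F μ lam k khat qA a h2 tA tH 1 :=
  strictMono_of_hasDerivAt_pos (hasDerivAt_F μ lam k khat qA a h2 tA tH)
    (fun s => G_pos μ lam k khat qA a h2 tA tH hμ hlam hk hkh hh2 hCS s) zero_lt_one

/-- Frobenius pairing of the stress with `Hᵀ`, in scalar form. -/
lemma trace_stress_mul (μ lam k khat : ℝ) (A H : M3) :
    Matrix.trace (expHenckyStressFull μ lam k khat A * Hᵀ) =
      2 * μ * Real.exp (k * Matrix.trace (A * Aᵀ)) * Real.exp (-Matrix.trace A) *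
          Matrix.trace (A * Hᵀ) +
        lam * Real.exp (khat * (Matrix.trace A) ^ 2) * Real.exp (-Matrix.trace A) *
          Matrix.trace A * Matrix.trace H := by
  simp [expHenckyStressFull, Matrix.add_mul, Matrix.smul_mul, Matrix.trace_smul,
    Matrix.trace_transpose, smul_eq_mul]

lemma trace_symm (A H : M3) : Matrix.trace (H * Aᵀ) = Matrix.trace (A * Hᵀ) := by
  rw [← Matrix.trace_transpose (H * Aᵀ), Matrix.transpose_mul, Matrix.transpose_transpose]

lemma trace_sq_expand (A H : M3) : Matrix.trace ((A + H) * (A + H)ᵀ) =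
    Matrix.trace (A * Aᵀ) + 2 * Matrix.trace (A * Hᵀ) + Matrix.trace (H * Hᵀ) := by
  simp [Matrix.transpose_add, Matrix.mul_add, Matrix.add_mul, Matrix.trace_add, trace_symm A H]
  ring

lemma trace_CS (H : M3) : (Matrix.trace H) ^ 2 ≤ 3 * Matrix.trace (H * Hᵀ) := by
  simp only [Matrix.trace, Matrix.mul_apply, Fin.sum_univ_three, Matrix.diag,
    Matrix.transpose_apply]
  nlinarith [sq_nonneg (H 0 0 - H 1 1), sq_nonneg (H 0 0 - H 2 2), sq_nonneg (H 1 1 - H 2 2),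
    sq_nonneg (H 0 1), sq_nonneg (H 0 2), sq_nonneg (H 1 0), sq_nonneg (H 1 2),
    sq_nonneg (H 2 0), sq_nonneg (H 2 1)]

lemma trace_sq_nonneg (H : M3) : 0 ≤ Matrix.trace (H * Hᵀ) := by
  have : Matrix.trace (H * Hᵀ) = ∑ i, ∑ j, (H i j) ^ 2 := by
    simp [Matrix.trace, Matrix.mul_apply, Matrix.diag, sq]
  rw [this]
  exact Finset.sum_nonneg fun _ _ => Finset.sum_nonneg fun _ _ => sq_nonneg _

lemma trace_sq_pos (H : M3) (h : H ≠ 0) : 0 < Matrix.trace (H * Hᵀ) := by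
  obtain ⟨i, j, hij⟩ : ∃ i j, H i j ≠ 0 := by
    by_contra hc
    push_neg at hc
    exact h (Matrix.ext fun i j => hc i j)
  have ht : Matrix.trace (H * Hᵀ) = ∑ i, ∑ j, (H i j) ^ 2 := by
    simp [Matrix.trace, Matrix.mul_apply, Matrix.diag, sq]
  rw [ht]
  calc (0:ℝ) < (H i j) ^ 2 := by positivity
    _ ≤ ∑ j', (H i j') ^ 2 :=
        Finset.single_le_sum (f := fun j' => (H i j') ^ 2) (fun _ _ => sq_nonneg _)
          (Finset.mem_univ j)
    _ ≤ ∑ i', ∑ j', (H i' j') ^ 2 :=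
        Finset.single_le_sum (f := fun i' => ∑ j', (H i' j') ^ 2)
          (fun _ _ => Finset.sum_nonneg fun _ _ => sq_nonneg _) (Finset.mem_univ i)

/-- The key reduction: the monotonicity pairing equals `F 1 - F 0`. -/
lemma pairing_eq (μ lam k khat : ℝ) (X₁ X₂ : M3) :
    Matrix.trace ((expHenckyStressFull μ lam k khat X₁ -
        expHenckyStressFull μ lam k khat X₂) * (X₁ - X₂)ᵀ) =
      F μ lam k khat (Matrix.trace (X₂ * X₂ᵀ)) (Matrix.trace (X₂ * (X₁ - X₂)ᵀ))
          (Matrix.trace ((X₁ - X₂) * (X₁ - X₂)ᵀ)) (Matrix.trace X₂) (Matrix.trace (X₁ - X₂)) 1 -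
        F μ lam k khat (Matrix.trace (X₂ * X₂ᵀ)) (Matrix.trace (X₂ * (X₁ - X₂)ᵀ))
          (Matrix.trace ((X₁ - X₂) * (X₁ - X₂)ᵀ)) (Matrix.trace X₂) (Matrix.trace (X₁ - X₂)) 0 := by
  set H := X₁ - X₂ with hH
  have hX1 : X₁ = X₂ + H := by rw [hH]; abel
  have hsplit : Matrix.trace ((expHenckyStressFull μ lam k khat X₁ -
      expHenckyStressFull μ lam k khat X₂) * Hᵀ) =
      Matrix.trace (expHenckyStressFull μ lam k khat X₁ * Hᵀ) -
        Matrix.trace (expHenckyStressFull μ lam k khat X₂ * Hᵀ) := by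
    rw [Matrix.sub_mul, Matrix.trace_sub]
  rw [hsplit, trace_stress_mul, trace_stress_mul, hX1]
  have h1 : Matrix.trace ((X₂ + H) * (X₂ + H)ᵀ) =
      Matrix.trace (X₂ * X₂ᵀ) + 2 * Matrix.trace (X₂ * Hᵀ) + Matrix.trace (H * Hᵀ) :=
    trace_sq_expand X₂ H
  have h2 : Matrix.trace ((X₂ + H) * Hᵀ) = Matrix.trace (X₂ * Hᵀ) + Matrix.trace (H * Hᵀ) := by
    rw [Matrix.add_mul, Matrix.trace_add]
  have h3 : Matrix.trace (X₂ + H) = Matrix.trace X₂ + Matrix.trace H := Matrix.trace_add _ _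
  rw [h1, h2, h3]
  unfold F
  ring_nf

end ExpHenckyAux

/-- For `μ, λ > 0`, `k ≥ 3/8` and `k̂ ≥ 1/8`, the full exponentiated
Hencky stress is Hilbert-monotone on `Sym(3)`; if moreover `k > 3/8`, it is strictly
Hilbert-monotone. -/
theorem expHenckyFull_monotone (μ lam k khat : ℝ) (hμ : 0 < μ) (hlam : 0 < lam) :
    (3 / 8 ≤ k → 1 / 8 ≤ khat → ∀ X₁ X₂ : M3, X₁.IsSymm → X₂.IsSymm →
      0 ≤ Matrix.trace ((expHenckyStressFull μ lam k khat X₁ -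
            expHenckyStressFull μ lam k khat X₂) * (X₁ - X₂)ᵀ)) ∧
    (3 / 8 < k → 1 / 8 ≤ khat → ∀ X₁ X₂ : M3, X₁.IsSymm → X₂.IsSymm → X₁ ≠ X₂ →
      0 < Matrix.trace ((expHenckyStressFull μ lam k khat X₁ -
            expHenckyStressFull μ lam k khat X₂) * (X₁ - X₂)ᵀ)) := by
  constructor
  · intro hk hkh X₁ X₂ _ _
    rw [ExpHenckyAux.pairing_eq]
    have := ExpHenckyAux.F_mono μ lam k khat (Matrix.trace (X₂ * X₂ᵀ))
      (Matrix.trace (X₂ * (X₁ - X₂)ᵀ)) (Matrix.trace ((X₁ - X₂) * (X₁ - X₂)ᵀ))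
      (Matrix.trace X₂) (Matrix.trace (X₁ - X₂)) hμ hlam hk hkh
      (ExpHenckyAux.trace_sq_nonneg (X₁ - X₂)) (ExpHenckyAux.trace_CS (X₁ - X₂))
    linarith
  · intro hk hkh X₁ X₂ _ _ hne
    rw [ExpHenckyAux.pairing_eq]
    have hH : X₁ - X₂ ≠ 0 := sub_ne_zero.mpr hne
    have := ExpHenckyAux.F_strictMono μ lam k khat (Matrix.trace (X₂ * X₂ᵀ))
      (Matrix.trace (X₂ * (X₁ - X₂)ᵀ)) (Matrix.trace ((X₁ - X₂) * (X₁ - X₂)ᵀ))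
      (Matrix.trace X₂) (Matrix.trace (X₁ - X₂)) hμ hlam hk hkh
      (ExpHenckyAux.trace_sq_pos (X₁ - X₂) hH) (ExpHenckyAux.trace_CS (X₁ - X₂))
    linarith
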